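/- For every even integer k ≥ 2, there exists a signed graph (G,σ) with χ((G,σ)) − 1 = χ_c((G,σ)) = k. -/

import Mathlib

variable {V : Type*}

/-- A signature of a graph `G`: a symmetric function assigning `+1` or `-1` to each edge. -/
def IsSignature (G : SimpleGraph V) (σ : V → V → ℤ) : Prop :=
  (∀ v w, σ v w = σ w v) ∧ ∀ v w, G.Adj v w → σ v w = 1 ∨ σ v w = -1

/-- `c : V → ZMod k` is a `(k,d)`-coloring of the signed graph `(G,σ)`:
for every edge `vw`, `|c v - σ(vw) * c w|_k ≥ d`, where `|x|_k = min([x]_k, [-x]_k)`. -/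
def IsKDColoring (G : SimpleGraph V) (σ : V → V → ℤ) (k d : ℕ) (c : V → ZMod k) : Prop :=
  ∀ v w, G.Adj v w →
    d ≤ min (ZMod.val (c v - (σ v w : ZMod k) * c w))
            (ZMod.val (-(c v - (σ v w : ZMod k) * c w)))

/-- `(G,σ)` has a `(k,d)`-coloring (with the standing assumptions `k,d ≥ 1`, `k ≥ 2d`). -/
def HasKDColoring (G : SimpleGraph V) (σ : V → V → ℤ) (k d : ℕ) : Prop :=
  0 < k ∧ 0 < d ∧ 2 * d ≤ k ∧ ∃ c : V → ZMod k, IsKDColoring G σ k d c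

/-- The circular chromatic number of a signed graph: the infimum of `k/d` over all
pairs `(k,d)` for which a `(k,d)`-coloring exists. -/
noncomputable def chiC (G : SimpleGraph V) (σ : V → V → ℤ) : ℝ :=
  sInf { r : ℝ | ∃ k d : ℕ, HasKDColoring G σ k d ∧ r = (k : ℝ) / d }

/-- The chromatic number of a signed graph: the least `k` with a `(k,1)`-coloring. -/
noncomputable def chi (G : SimpleGraph V) (σ : V → V → ℤ) : ℕ :=
  sInf { k : ℕ | HasKDColoring G σ k 1 }

namespace SgAux

lemma minval_ge_one {p : ℕ} [NeZero p] (x : ZMod p) (hx : x ≠ 0) :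
    1 ≤ min (ZMod.val x) (ZMod.val (-x)) := by
  have h1 : ZMod.val x ≠ 0 := fun h => hx ((ZMod.val_eq_zero x).mp h)
  have h2 : ZMod.val (-x) ≠ 0 := fun h => hx (by simpa using (ZMod.val_eq_zero (-x)).mp h)
  omega

lemma val_even_ge_two {k : ℕ} (hk : 2 ≤ k) (m : ℤ) (hm : ¬ ((2*(k:ℤ)) ∣ 2*m)) :
    2 ≤ ZMod.val (((2*m : ℤ) : ZMod (2*k))) := by
  haveI : NeZero (2*k) := ⟨by omega⟩
  set x : ZMod (2*k) := ((2*m : ℤ) : ZMod (2*k)) with hxdef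
  have hx0 : x ≠ 0 := by
    rw [hxdef, Ne, ZMod.intCast_zmod_eq_zero_iff_dvd]
    push_cast
    exact hm
  have hx1 : x ≠ 1 := by
    rw [hxdef]
    intro h
    have h' : ((2*m - 1 : ℤ) : ZMod (2*k)) = 0 := by
      push_cast at h ⊢
      rw [h]; ring
    rw [ZMod.intCast_zmod_eq_zero_iff_dvd] at h'
    obtain ⟨t, ht⟩ := h'
    have : 2*m - 1 = 2*((k:ℤ)*t) := by push_cast at ht; linarith
    omega
  have h1 : ZMod.val x ≠ 0 := fun h => hx0 ((ZMod.val_eq_zero x).mp h)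
  have h2 : ZMod.val x ≠ 1 := by
    intro h
    apply hx1
    have := ZMod.natCast_rightInverse (n := 2*k) x
    rw [h] at this
    simpa using this.symm
  omega

lemma minval_even_ge_two {k : ℕ} (hk : 2 ≤ k) (m : ℤ) (hm : ¬ ((2*(k:ℤ)) ∣ 2*m)) :
    2 ≤ min (ZMod.val (((2*m : ℤ) : ZMod (2*k)))) (ZMod.val (-((2*m : ℤ) : ZMod (2*k)))) := by
  have h1 := val_even_ge_two hk m hm
  have hm' : ¬ ((2*(k:ℤ)) ∣ 2*(-m)) := by
    rintro ⟨t, ht⟩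
    exact hm ⟨-t, by linarith⟩
  have h2 := val_even_ge_two hk (-m) hm'
  have heq : -((2*m : ℤ) : ZMod (2*k)) = ((2*(-m) : ℤ) : ZMod (2*k)) := by push_cast; ring
  rw [heq]
  omega

lemma sep {p q kk : ℕ} (hp : 0 < p) (hqp : q ≤ p)
    (x : Fin kk → ZMod p)
    (hx : ∀ i j, i ≠ j → q ≤ min (ZMod.val (x i - x j)) (ZMod.val (-(x i - x j)))) :
    kk * q ≤ p := by
  haveI : NeZero p := ⟨hp.ne'⟩
  classical
  set f : Fin kk → Finset (ZMod p) :=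
    fun i => Finset.image (fun t : ℕ => x i + ((t : ℕ) : ZMod p)) (Finset.range q) with hf
  have hcard : ∀ i, (f i).card = q := by
    intro i
    rw [hf]
    simp only
    rw [Finset.card_image_of_injOn, Finset.card_range]
    intro s hs t ht hst
    simp only [Finset.mem_coe, Finset.mem_range] at hs ht
    have hc : ((s:ℕ) : ZMod p) = ((t:ℕ) : ZMod p) := add_left_cancel hst
    have hs' := ZMod.val_cast_of_lt (n := p) (lt_of_lt_of_le hs hqp)
    have ht' := ZMod.val_cast_of_lt (n := p) (lt_of_lt_of_le ht hqp)
    rw [← hs', ← ht', hc]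
  have hdisj : ((Finset.univ : Finset (Fin kk)) : Set (Fin kk)).PairwiseDisjoint f := by
    intro i _ j _ hij
    rw [Function.onFun, Finset.disjoint_left]
    intro y hyi hyj
    rw [hf] at hyi hyj
    simp only [Finset.mem_image, Finset.mem_range] at hyi hyj
    obtain ⟨t, ht, hyt⟩ := hyi
    obtain ⟨s, hs, hys⟩ := hyj
    have key : x i - x j = ((s:ℕ) : ZMod p) - ((t:ℕ) : ZMod p) := by
      have h0 : x i + ((t:ℕ):ZMod p) = x j + ((s:ℕ):ZMod p) := by rw [hyt, hys]
      linear_combination h0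
    have hmin := hx i j hij
    rcases le_or_gt t s with h | h
    · have he : x i - x j = ((s - t : ℕ) : ZMod p) := by
        rw [key, Nat.cast_sub h]
      have hv : ZMod.val (x i - x j) = s - t := by
        rw [he, ZMod.val_cast_of_lt]; omega
      omega
    · have he : -(x i - x j) = ((t - s : ℕ) : ZMod p) := by
        rw [key, Nat.cast_sub (le_of_lt h)]; ring
      have hv : ZMod.val (-(x i - x j)) = t - s := by
        rw [he, ZMod.val_cast_of_lt]; omega
      omega
  have hcard2 : (Finset.univ.disjiUnion f hdisj).card = kk * q := by
    rw [Finset.card_disjiUnion]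
    simp [hcard, Finset.sum_const, Finset.card_univ]
  calc kk * q = (Finset.univ.disjiUnion f hdisj).card := hcard2.symm
    _ ≤ (Finset.univ : Finset (ZMod p)).card := Finset.card_le_univ _
    _ = p := by rw [Finset.card_univ, ZMod.card]

/-- adjacency pattern on indices: clique `[0,k)`, gadget vertices `[k,3k)`. -/
def sgAdj (k : ℕ) (i j : ℕ) : Prop :=
  (i < k ∧ j < k) ∨ (k ≤ i ∧ j < k ∧ j ≠ i % k) ∨ (k ≤ j ∧ i < k ∧ i ≠ j % k) ∨
  (k ≤ i ∧ j = i + k) ∨ (k ≤ j ∧ i = j + k)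

@[reducible] def sgG (k : ℕ) : SimpleGraph (Fin (3*k)) where
  Adj i j := i ≠ j ∧ sgAdj k i.val j.val
  symm := by
    constructor
    rintro i j ⟨hne, h⟩
    refine ⟨hne.symm, ?_⟩
    unfold sgAdj at *
    tauto
  loopless := ⟨fun i h => h.1 rfl⟩

def sgSig (k : ℕ) (i j : Fin (3*k)) : ℤ :=
  if (k ≤ i.val ∧ j.val = i.val + k) ∨ (k ≤ j.val ∧ i.val = j.val + k) then -1 else 1

lemma sgSig_symm (k : ℕ) (i j : Fin (3*k)) : sgSig k i j = sgSig k j i := by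
  unfold sgSig
  by_cases h : (k ≤ i.val ∧ j.val = i.val + k) ∨ (k ≤ j.val ∧ i.val = j.val + k)
  · rw [if_pos h, if_pos (or_comm.mp h)]
  · rw [if_neg h, if_neg (fun h' => h (or_comm.mp h'))]

lemma sgSig_pm (k : ℕ) (i j : Fin (3*k)) : sgSig k i j = 1 ∨ sgSig k i j = -1 := by
  unfold sgSig
  split <;> simp

lemma sgSig_pos (k : ℕ) (i j : Fin (3*k))
    (h : ¬ ((k ≤ i.val ∧ j.val = i.val + k) ∨ (k ≤ j.val ∧ i.val = j.val + k))) :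
    sgSig k i j = 1 := if_neg h

lemma sgSig_neg (k : ℕ) (i j : Fin (3*k))
    (h : (k ≤ i.val ∧ j.val = i.val + k) ∨ (k ≤ j.val ∧ i.val = j.val + k)) :
    sgSig k i j = -1 := if_pos h

lemma F4pos {k : ℕ} (hk : 2 ≤ k) (a b : ℕ) (ha : a < k) (hb : b < k) (hab : a ≠ b) :
    2 ≤ min (ZMod.val (((2*a+1 : ℕ) : ZMod (2*k)) - ((2*b+1 : ℕ) : ZMod (2*k))))
            (ZMod.val (-(((2*a+1 : ℕ) : ZMod (2*k)) - ((2*b+1 : ℕ) : ZMod (2*k))))) := by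
  have heq : ((2*a+1 : ℕ) : ZMod (2*k)) - ((2*b+1 : ℕ) : ZMod (2*k))
      = ((2*((a:ℤ) - b) : ℤ) : ZMod (2*k)) := by push_cast; ring
  rw [heq]
  apply minval_even_ge_two hk
  rintro ⟨t, ht⟩
  have h1 : (k:ℤ) ∣ ((a:ℤ) - b) := ⟨t, by linarith⟩
  have h2 : ((a:ℤ) - b).natAbs < (k:ℤ).natAbs := by omega
  have := Int.eq_zero_of_dvd_of_natAbs_lt_natAbs h1 h2
  omega

lemma F4neg {k : ℕ} (hk : 2 ≤ k) (hke : Even k) (a : ℕ) (ha : a < k) :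
    2 ≤ min (ZMod.val (((2*a+1 : ℕ) : ZMod (2*k)) + ((2*a+1 : ℕ) : ZMod (2*k))))
            (ZMod.val (-(((2*a+1 : ℕ) : ZMod (2*k)) + ((2*a+1 : ℕ) : ZMod (2*k))))) := by
  have heq : ((2*a+1 : ℕ) : ZMod (2*k)) + ((2*a+1 : ℕ) : ZMod (2*k))
      = ((2*(2*(a:ℤ)+1) : ℤ) : ZMod (2*k)) := by push_cast; ring
  rw [heq]
  apply minval_even_ge_two hk
  rintro ⟨t, ht⟩
  obtain ⟨e, he⟩ := hke
  have h1 : (2*(a:ℤ)+1) = 2*((e:ℤ)*t) := by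
    have : (k:ℤ) = 2*e := by push_cast [he]; ring
    rw [this] at ht
    linarith
  omega

lemma neq_cast {p : ℕ} [NeZero p] (a b : ℕ) (ha : a < p) (hb : b < p) (hab : a ≠ b) :
    ((a : ZMod p)) ≠ (b : ZMod p) := fun h =>
  hab (by rw [← ZMod.val_cast_of_lt ha, ← ZMod.val_cast_of_lt hb, h])

end SgAux

namespace SgAux

lemma F1 {k : ℕ} (hk : 2 ≤ k) (p q : ℕ)
    (h : HasKDColoring (sgG k) (sgSig k) p q) : k * q ≤ p := by
  obtain ⟨hp, hq, hpq, c, hc⟩ := h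
  haveI : NeZero p := ⟨hp.ne'⟩
  set x : Fin k → ZMod p := fun i => c ⟨i.val, by omega⟩ with hx
  apply sep hp (by omega) x
  intro i j hij
  have hvadj : (sgG k).Adj ⟨i.val, by omega⟩ ⟨j.val, by omega⟩ := by
    refine ⟨?_, Or.inl ⟨i.isLt, j.isLt⟩⟩
    simp only [ne_eq, Fin.mk.injEq]
    exact fun h => hij (Fin.ext h)
  have := hc _ _ hvadj
  rw [sgSig_pos k _ _ (by simp only; omega)] at this
  simpa using this

lemma F2 {k : ℕ} (hk : 2 ≤ k) :
    ¬ HasKDColoring (sgG k) (sgSig k) k 1 := by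
  rintro ⟨hp, hq, hpq, c, hc⟩
  haveI : NeZero k := ⟨hp.ne'⟩
  set f : Fin k → ZMod k := fun a => c ⟨a.val, by omega⟩ with hf
  have hne : ∀ v w, (sgG k).Adj v w → sgSig k v w = 1 → c v ≠ c w := by
    intro v w hadj hsig hcc
    have := hc v w hadj
    rw [hsig] at this
    simp only [Int.cast_one, one_mul, hcc, sub_self, neg_zero, ZMod.val_zero, min_self] at this
    omega
  have hinj : Function.Injective f := by
    intro a b hab
    by_contra hne'
    have hadj : (sgG k).Adj ⟨a.val, by omega⟩ ⟨b.val, by omega⟩ := by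
      refine ⟨?_, Or.inl ⟨a.isLt, b.isLt⟩⟩
      simp only [ne_eq, Fin.mk.injEq]
      exact fun h => hne' (Fin.ext h)
    exact hne _ _ hadj (sgSig_pos k _ _ (by simp only; omega)) hab
  have hsurj : Function.Surjective f := by
    have hcard : Fintype.card (Fin k) = Fintype.card (ZMod k) := by
      rw [Fintype.card_fin, ZMod.card]
    exact (Fintype.bijective_iff_injective_and_card f).mpr ⟨hinj, hcard⟩ |>.2
  obtain ⟨a, ha⟩ := hsurj 0
  set u1 : Fin (3*k) := ⟨k + a.val, by omega⟩ with hu1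
  set u2 : Fin (3*k) := ⟨2*k + a.val, by omega⟩ with hu2
  -- c u1 = 0
  have hu : ∀ u : Fin (3*k), k ≤ u.val → u.val % k = a.val → c u = 0 := by
    intro u hku hua
    obtain ⟨b, hb⟩ := hsurj (c u)
    rcases eq_or_ne b a with rfl | hba
    · rw [← hb, ha]
    · exfalso
      have hadj : (sgG k).Adj u ⟨b.val, by omega⟩ := by
        refine ⟨?_, Or.inr (Or.inl ⟨hku, b.isLt, ?_⟩)⟩
        · simp only [ne_eq, Fin.ext_iff]
          omega
        · simp only
          rw [hua]
          exact fun h => hba (Fin.ext h)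
      exact hne _ _ hadj (sgSig_pos k _ _ (by simp only; omega)) hb.symm
  have halt : a.val < k := a.isLt
  have hc1 : c u1 = 0 := hu u1 (by show k ≤ k + a.val; omega) (by show (k + a.val) % k = a.val; rw [Nat.add_mod_left]; exact Nat.mod_eq_of_lt halt)
  have hc2 : c u2 = 0 := hu u2 (by show k ≤ 2*k + a.val; omega) (by show (2*k + a.val) % k = a.val; rw [two_mul, add_assoc, Nat.add_mod_left, Nat.add_mod_left]; exact Nat.mod_eq_of_lt halt)
  have hadj12 : (sgG k).Adj u1 u2 := by
    refine ⟨?_, Or.inr (Or.inr (Or.inr (Or.inl ⟨?_, ?_⟩)))⟩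
    · simp only [ne_eq, Fin.mk.injEq, hu1, hu2]
      omega
    · show k ≤ k + a.val; omega
    · show 2*k + a.val = (k + a.val) + k; omega
  have := hc u1 u2 hadj12
  rw [sgSig_neg k u1 u2 (Or.inl ⟨by show k ≤ k + a.val; omega,
      by show 2*k + a.val = (k + a.val) + k; omega⟩)] at this
  simp only [Int.cast_neg, Int.cast_one, neg_one_mul, sub_neg_eq_add, hc1, hc2, mul_zero,
    add_zero, zero_add, sub_zero, neg_zero, ZMod.val_zero, min_self] at this
  omega

lemma F3 {k : ℕ} (hk : 2 ≤ k) (hke : Even k) :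
    HasKDColoring (sgG k) (sgSig k) (k+1) 1 := by
  haveI : NeZero (k+1) := ⟨by omega⟩
  refine ⟨by omega, by omega, by omega,
    fun i => if i.val = 2*k then ((k : ℕ) : ZMod (k+1)) else ((i.val % k : ℕ) : ZMod (k+1)), ?_⟩
  intro v w ⟨hvw, hadj⟩
  set c : Fin (3*k) → ZMod (k+1) :=
    fun i => if i.val = 2*k then ((k : ℕ) : ZMod (k+1)) else ((i.val % k : ℕ) : ZMod (k+1)) with hcdef
  have hvw' : v.val ≠ w.val := fun h => hvw (Fin.ext h)
  have hkpos : 0 < k := by omega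
  -- helper for positive edges
  have hpos : ∀ v w : Fin (3*k), c v ≠ c w →
      (1 : ℕ) ≤ min (ZMod.val (c v - ((1 : ℤ) : ZMod (k+1)) * c w))
        (ZMod.val (-(c v - ((1 : ℤ) : ZMod (k+1)) * c w))) := by
    intro v w hne
    simp only [Int.cast_one, one_mul]
    exact minval_ge_one _ (sub_ne_zero.mpr hne)
  have hcv : ∀ u : Fin (3*k), u.val ≠ 2*k → c u = ((u.val % k : ℕ) : ZMod (k+1)) := by
    intro u hu
    simp [hcdef, hu]
  have hck : ∀ u : Fin (3*k), u.val = 2*k → c u = ((k : ℕ) : ZMod (k+1)) := by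
    intro u hu
    simp [hcdef, hu]
  -- negative edge computation
  have hnegcase : ∀ v w : Fin (3*k), k ≤ v.val → w.val = v.val + k →
      (1 : ℕ) ≤ min (ZMod.val (c v - ((-1 : ℤ) : ZMod (k+1)) * c w))
        (ZMod.val (-(c v - ((-1 : ℤ) : ZMod (k+1)) * c w))) := by
    intro v w hkv hwv
    have hv2 : v.val < 2*k := by omega
    have hvne : v.val ≠ 2*k := by omega
    have hvmod : v.val % k = v.val - k := by
      rw [Nat.mod_eq_sub_mod hkv, Nat.mod_eq_of_lt (by omega)]
    simp only [Int.cast_neg, Int.cast_one, neg_one_mul, sub_neg_eq_add]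
    apply minval_ge_one
    rcases eq_or_ne w.val (2*k) with hw2 | hw2
    · -- a = 0 case
      have hva : v.val % k = 0 := by rw [hvmod]; omega
      rw [hcv v hvne, hck w hw2, hva]
      simp only [Nat.cast_zero, zero_add]
      exact fun h => (by omega : k ≠ 0) (by
        have := ZMod.val_cast_of_lt (a := k) (n := k+1) (by omega)
        rw [h] at this
        simpa using this.symm)
    · -- a ≠ 0 case
      have hwmod : w.val % k = v.val % k := by
        rw [hwv]; exact Nat.add_mod_right _ _
      have hane : v.val % k ≠ 0 := by rw [hvmod]; omega
      rw [hcv v hvne, hcv w hw2, hwmod]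
      intro hzero
      have h2a : (((2 * (v.val % k)) : ℕ) : ZMod (k+1)) = 0 := by
        push_cast at hzero ⊢
        rw [two_mul]
        exact hzero
      rw [ZMod.natCast_eq_zero_iff] at h2a
      obtain ⟨t, ht⟩ := h2a
      have halt : v.val % k < k := Nat.mod_lt _ hkpos
      have htlt : t < 2 := by
        by_contra hge
        push_neg at hge
        have : (k+1)*2 ≤ (k+1)*t := Nat.mul_le_mul_left _ hge
        omega
      obtain ⟨e, he⟩ := hke
      interval_cases t <;> omega
  rcases hadj with ⟨hv, hw⟩ | ⟨hv, hw, hwa⟩ | ⟨hv, hw, hwa⟩ | ⟨hv, hw⟩ | ⟨hv, hw⟩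
  · -- clique
    rw [sgSig_pos k v w (by omega)]
    apply hpos
    rw [hcv v (by omega), hcv w (by omega), Nat.mod_eq_of_lt hv, Nat.mod_eq_of_lt hw]
    exact neq_cast _ _ (by omega) (by omega) hvw'
  · -- gadget v to clique w
    rw [sgSig_pos k v w (by omega)]
    apply hpos
    rw [hcv w (by omega), Nat.mod_eq_of_lt hw]
    rcases eq_or_ne v.val (2*k) with hv2 | hv2
    · rw [hck v hv2]
      exact neq_cast _ _ (by omega) (by omega) (by omega)
    · rw [hcv v hv2]
      exact neq_cast _ _ (Nat.lt_of_lt_of_le (Nat.mod_lt _ hkpos) (by omega)) (by omega)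
        (fun h => hwa h.symm)
  · -- clique v to gadget w
    rw [sgSig_pos k v w (by omega)]
    apply hpos
    rw [hcv v (by omega), Nat.mod_eq_of_lt hw]
    rcases eq_or_ne w.val (2*k) with hw2 | hw2
    · rw [hck w hw2]
      exact neq_cast _ _ (by omega) (by omega) (by omega)
    · rw [hcv w hw2]
      exact neq_cast _ _ (by omega) (Nat.lt_of_lt_of_le (Nat.mod_lt _ hkpos) (by omega)) hwa
  · -- negative edge v → w = v+k
    rw [sgSig_neg k v w (Or.inl ⟨hv, hw⟩)]
    exact hnegcase v w hv hw
  · -- negative edge w → v = w+k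
    rw [sgSig_neg k v w (Or.inr ⟨hv, hw⟩)]
    have := hnegcase w v hv hw
    -- symmetric: c v - (-1) * c w = c v + c w = c w + c v
    simp only [Int.cast_neg, Int.cast_one, neg_one_mul, sub_neg_eq_add] at this ⊢
    rw [add_comm (c v) (c w)]
    exact this

lemma F4 {k : ℕ} (hk : 2 ≤ k) (hke : Even k) :
    HasKDColoring (sgG k) (sgSig k) (2*k) 2 := by
  haveI : NeZero (2*k) := ⟨by omega⟩
  refine ⟨by omega, by omega, by omega,
    fun i => ((2*(i.val % k) + 1 : ℕ) : ZMod (2*k)), ?_⟩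
  intro v w ⟨hvw, hadj⟩
  have hvw' : v.val ≠ w.val := fun h => hvw (Fin.ext h)
  have hkpos : 0 < k := by omega
  have hposcase : ∀ v w : Fin (3*k), v.val % k ≠ w.val % k →
      (2 : ℕ) ≤ min (ZMod.val (((2*(v.val % k) + 1 : ℕ) : ZMod (2*k)) -
          ((1 : ℤ) : ZMod (2*k)) * ((2*(w.val % k) + 1 : ℕ) : ZMod (2*k))))
        (ZMod.val (-(((2*(v.val % k) + 1 : ℕ) : ZMod (2*k)) -
          ((1 : ℤ) : ZMod (2*k)) * ((2*(w.val % k) + 1 : ℕ) : ZMod (2*k))))) := by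
    intro v w hne
    simp only [Int.cast_one, one_mul]
    exact F4pos hk _ _ (Nat.mod_lt _ hkpos) (Nat.mod_lt _ hkpos) hne
  have hnegcase : ∀ v w : Fin (3*k), v.val % k = w.val % k →
      (2 : ℕ) ≤ min (ZMod.val (((2*(v.val % k) + 1 : ℕ) : ZMod (2*k)) -
          ((-1 : ℤ) : ZMod (2*k)) * ((2*(w.val % k) + 1 : ℕ) : ZMod (2*k))))
        (ZMod.val (-(((2*(v.val % k) + 1 : ℕ) : ZMod (2*k)) -
          ((-1 : ℤ) : ZMod (2*k)) * ((2*(w.val % k) + 1 : ℕ) : ZMod (2*k))))) := by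
    intro v w heq
    simp only [Int.cast_neg, Int.cast_one, neg_one_mul, sub_neg_eq_add, heq]
    exact F4neg hk hke _ (Nat.mod_lt _ hkpos)
  rcases hadj with ⟨hv, hw⟩ | ⟨hv, hw, hwa⟩ | ⟨hv, hw, hwa⟩ | ⟨hv, hw⟩ | ⟨hv, hw⟩
  · rw [sgSig_pos k v w (by omega)]
    exact hposcase v w (by rw [Nat.mod_eq_of_lt hv, Nat.mod_eq_of_lt hw]; exact hvw')
  · rw [sgSig_pos k v w (by omega)]
    exact hposcase v w (by rw [Nat.mod_eq_of_lt hw]; exact fun h => hwa h.symm)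
  · rw [sgSig_pos k v w (by omega)]
    exact hposcase v w (by rw [Nat.mod_eq_of_lt hw]; exact hwa)
  · rw [sgSig_neg k v w (Or.inl ⟨hv, hw⟩)]
    exact hnegcase v w (by rw [hw]; exact (Nat.add_mod_right _ _).symm)
  · rw [sgSig_neg k v w (Or.inr ⟨hv, hw⟩)]
    exact hnegcase v w (by rw [hw]; exact Nat.add_mod_right _ _)

end SgAux


/-- For every even `k ≥ 2`, there is a signed graph `(G,σ)` with
`χ((G,σ)) - 1 = χ_c((G,σ)) = k`. -/
theorem exists_signedGraph_chi_sub_one_eq_chiC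
    (k : ℕ) (hk : 2 ≤ k) (hke : Even k) :
    ∃ (n : ℕ) (G : SimpleGraph (Fin n)) (σ : Fin n → Fin n → ℤ),
      IsSignature G σ ∧ chi G σ = k + 1 ∧ chiC G σ = (k : ℝ) := by
  refine ⟨3*k, SgAux.sgG k, SgAux.sgSig k,
    ⟨SgAux.sgSig_symm k, fun v w _ => SgAux.sgSig_pm k v w⟩, ?_, ?_⟩
  · -- chi = k + 1
    unfold chi
    have hmem : (k+1) ∈ {m : ℕ | HasKDColoring (SgAux.sgG k) (SgAux.sgSig k) m 1} :=
      SgAux.F3 hk hke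
    apply le_antisymm
    · exact Nat.sInf_le hmem
    · apply le_csInf ⟨_, hmem⟩
      intro m hm
      have h1 : k * 1 ≤ m := SgAux.F1 hk m 1 hm
      have h2 : m ≠ k := fun h => SgAux.F2 hk (h ▸ hm)
      omega
  · -- chiC = k
    unfold chiC
    have hmem : (k:ℝ) ∈ {r : ℝ | ∃ p q : ℕ,
        HasKDColoring (SgAux.sgG k) (SgAux.sgSig k) p q ∧ r = (p:ℝ)/q} := by
      refine ⟨2*k, 2, SgAux.F4 hk hke, ?_⟩
      push_cast
      ring
    have hlb : ∀ r ∈ {r : ℝ | ∃ p q : ℕ,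
        HasKDColoring (SgAux.sgG k) (SgAux.sgSig k) p q ∧ r = (p:ℝ)/q}, (k:ℝ) ≤ r := by
      rintro r ⟨p, q, hpq, rfl⟩
      have h1 : k * q ≤ p := SgAux.F1 hk p q hpq
      have hq : 0 < q := hpq.2.1
      rw [le_div_iff₀ (by exact_mod_cast hq)]
      exact_mod_cast h1
    exact le_antisymm (csInf_le ⟨(k:ℝ), hlb⟩ hmem) (le_csInf ⟨_, hmem⟩ hlb)
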